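/- Let G be a finite simple graph, S a set of vertices, and 𝓕 a family of pairwise disjoint S-flaps of G. Let W be a path in G with k ≥ 1 edges whose first and last vertices do not belong to any flap in 𝓕. Then the number of flaps X ∈ 𝓕 with V(W) ∩ X ≠ ∅ is at most ⌈(k − 1)/2⌉. -/

import Mathlib

open SimpleGraph

open scoped Classical

/-- An `S`-flap of `G`: a vertex set `X` disjoint from `S` with no edges of `G` between
`X` and `V(G) ∖ (S ∪ X)`. -/
def IsFlap {V : Type*} (G : SimpleGraph V) (S X : Set V) : Prop :=
  X ∩ S = ∅ ∧ ∀ x ∈ X, ∀ y : V, y ∉ S → y ∉ X → ¬G.Adj x y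

/-- Let `𝓕` be a family of pairwise disjoint `S`-flaps of `G` and let
`W` be a path with `k ≥ 1` edges whose endpoints lie in no flap of `𝓕`. Then `W` meets at
most `⌈(k − 1)/2⌉` of the flaps of `𝓕`. -/
theorem stmt_16 {V : Type*} [Fintype V] (G : SimpleGraph V) (S : Set V)
    (𝓕 : Finset (Set V)) (hflap : ∀ X ∈ 𝓕, IsFlap G S X)
    (hdisj : ∀ X ∈ 𝓕, ∀ Y ∈ 𝓕, X ≠ Y → Disjoint X Y)
    (u v : V) (W : G.Walk u v) (hpath : W.IsPath) (k : ℕ) (hlen : W.length = k)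
    (hk : 1 ≤ k) (hu : ∀ X ∈ 𝓕, u ∉ X) (hv : ∀ X ∈ 𝓕, v ∉ X) :
    (𝓕.filter fun X => ∃ z ∈ W.support, z ∈ X).card ≤ (k - 1 + 1) / 2 := by
  set T := 𝓕.filter fun X => ∃ z ∈ W.support, z ∈ X with hT
  -- for each flap in T, the set of indices hitting it is nonempty
  have hne : ∀ X ∈ T, ∃ i, W.getVert i ∈ X := by
    intro X hX
    obtain ⟨-, z, hz, hzX⟩ := Finset.mem_filter.mp hX
    obtain ⟨n, hn, -⟩ := SimpleGraph.Walk.mem_support_iff_exists_getVert.mp hz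
    exact ⟨n, hn ▸ hzX⟩
  -- the minimal index hitting X
  let m : Set V → ℕ := fun X => sInf {i | W.getVert i ∈ X}
  have hmem : ∀ X ∈ T, W.getVert (m X) ∈ X := by
    intro X hX
    exact Nat.sInf_mem (hne X hX)
  have hmin : ∀ X ∈ T, ∀ j < m X, W.getVert j ∉ X := by
    intro X hX j hj
    exact Nat.notMem_of_lt_sInf hj
  have h𝓕 : ∀ X ∈ T, X ∈ 𝓕 := fun X hX => (Finset.mem_filter.mp hX).1
  have hm1 : ∀ X ∈ T, 1 ≤ m X := by
    intro X hX
    by_contra h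
    push_neg at h
    interval_cases h' : m X
    · have := hmem X hX
      rw [h', W.getVert_zero] at this
      exact hu X (h𝓕 X hX) this
  have hmk : ∀ X ∈ T, m X < k := by
    intro X hX
    obtain ⟨-, z, hz, hzX⟩ := Finset.mem_filter.mp hX
    obtain ⟨n, hn, hnk⟩ := SimpleGraph.Walk.mem_support_iff_exists_getVert.mp hz
    have h1 : m X ≤ n := Nat.sInf_le (show W.getVert n ∈ X from hn.symm ▸ hzX)
    have h2 : m X ≠ k := by
      intro h
      have := hmem X hX
      rw [h, ← hlen, W.getVert_length] at this
      exact hv X (h𝓕 X hX) this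
    omega
  -- the vertex before the first hit is in S
  have hS : ∀ X ∈ T, W.getVert (m X - 1) ∈ S := by
    intro X hX
    have h1 := hm1 X hX
    have h2 := hmk X hX
    have hadj : G.Adj (W.getVert (m X - 1)) (W.getVert (m X - 1 + 1)) :=
      W.adj_getVert_succ (by omega)
    have heq : m X - 1 + 1 = m X := by omega
    rw [heq] at hadj
    have hnX : W.getVert (m X - 1) ∉ X := hmin X hX _ (by omega)
    by_contra hnS
    exact (hflap X (h𝓕 X hX)).2 _ (hmem X hX) _ hnS hnX hadj.symm
  -- minimal indices of distinct flaps are ≥ 2 apart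
  have hsep : ∀ X ∈ T, ∀ Y ∈ T, X ≠ Y → m X + 2 ≤ m Y ∨ m Y + 2 ≤ m X := by
    intro X hX Y hY hXY
    have hne' : m X ≠ m Y := by
      intro h
      exact (hdisj X (h𝓕 X hX) Y (h𝓕 Y hY) hXY).ne_of_mem (hmem X hX)
        (h ▸ hmem Y hY) rfl
    have hsucc : ∀ Z ∈ T, ∀ Z' ∈ T, Z ≠ Z' → m Z' ≠ m Z + 1 := by
      intro Z hZ Z' hZ' hne'' h
      have h1 : W.getVert (m Z' - 1) ∈ S := hS Z' hZ'
      have h2 : W.getVert (m Z) ∈ Z := hmem Z hZ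
      have : m Z' - 1 = m Z := by omega
      rw [this] at h1
      have := (hflap Z (h𝓕 Z hZ)).1
      exact absurd (Set.mem_inter h2 h1) (by rw [this]; exact id)
    have h1 := hsucc X hX Y hY hXY
    have h2 := hsucc Y hY X hX hXY.symm
    omega
  -- injective map into range (k / 2)
  have key : T.card ≤ (Finset.range ((k - 1 + 1) / 2)).card := by
    apply Finset.card_le_card_of_injOn (fun X => (m X - 1) / 2)
    · intro X hX
      have h1 := hm1 X hX
      have h2 := hmk X hX
      simp only [Finset.mem_coe, Finset.mem_range]
      omega
    · intro X hX Y hY h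
      by_contra hXY
      have h1 := hsep X hX Y hY hXY
      have h2 := hm1 X hX
      have h3 := hm1 Y hY
      simp only at h
      omega
  simpa [Finset.card_range] using key
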